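/- arXiv:1305.6410 — 5 statements merged into one kernel-verified Lean document; each statement's English description precedes it below -/
import Mathlib

section
/- Y₊ and Y₋ are orthogonal projections (self-adjoint idempotent bounded operators on H), and T*T = (1/8)(id + 𝐈 + 6Y₊). -/
/- In SL(2,ℤ) set L := [[1,1],[0,1]], R := [[1,0],[1,1]], J := [[0,1],[-1,0]],
-1 := [[-1,0],[0,-1]].  Let H be a complex Hilbert space and ρ a unitary
representation of SL(2,ℤ) on H.  With 𝐋 := ρ(L), 𝐑 := ρ(R), 𝐉 := ρ(J), 𝐈 := ρ(-1),
T := (𝐋 + 𝐑)/2, Y₊ := (1/3)((3/2)·id − (1/2)𝐈 + 𝐑⁻¹𝐋 + 𝐋⁻¹𝐑), Y₋ := 𝐉*Y₊𝐉,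
the operators Y₊ and Y₋ are orthogonal projections (self-adjoint idempotents) and
T*T = (1/8)(id + 𝐈 + 6Y₊). -/

noncomputable section

abbrev SL2Z := Matrix.SpecialLinearGroup (Fin 2) ℤ

def Lmat : SL2Z := ⟨!![1, 1; 0, 1], by decide⟩
def Rmat : SL2Z := ⟨!![1, 0; 1, 1], by decide⟩
def Jmat : SL2Z := ⟨!![0, 1; -1, 0], by decide⟩
def Imat : SL2Z := ⟨!![-1, 0; 0, -1], by decide⟩

variable {H : Type*} [NormedAddCommGroup H] [InnerProductSpace ℂ H] [CompleteSpace H]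

/-- The bounded operator associated to a group element by the unitary representation. -/
def rop (ρ : SL2Z →* unitary (H →L[ℂ] H)) (g : SL2Z) : H →L[ℂ] H := (ρ g : H →L[ℂ] H)

/-- The Markov operator T = (𝐋 + 𝐑)/2. -/
def opT (ρ : SL2Z →* unitary (H →L[ℂ] H)) : H →L[ℂ] H := (2 : ℂ)⁻¹ • (rop ρ Lmat + rop ρ Rmat)

/-- Y₊ = (1/3)((3/2)·id − (1/2)𝐈 + 𝐑⁻¹𝐋 + 𝐋⁻¹𝐑). -/
def opYp (ρ : SL2Z →* unitary (H →L[ℂ] H)) : H →L[ℂ] H :=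
  (3 : ℂ)⁻¹ • ((3 / 2 : ℂ) • (1 : H →L[ℂ] H) - (2 : ℂ)⁻¹ • rop ρ Imat
    + rop ρ Rmat⁻¹ * rop ρ Lmat + rop ρ Lmat⁻¹ * rop ρ Rmat)

/-- Y₋ = 𝐉* Y₊ 𝐉. -/
def opYm (ρ : SL2Z →* unitary (H →L[ℂ] H)) : H →L[ℂ] H :=
  ContinuousLinearMap.adjoint (rop ρ Jmat) * opYp ρ * rop ρ Jmat

-- auxiliary lemmas
lemma rop_mul (ρ : SL2Z →* unitary (H →L[ℂ] H)) (g h : SL2Z) :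
    rop ρ (g * h) = rop ρ g * rop ρ h := by
  simp [rop, map_mul]

lemma rop_one (ρ : SL2Z →* unitary (H →L[ℂ] H)) : rop ρ (1 : SL2Z) = 1 := by
  rw [rop, map_one]; exact OneMemClass.coe_one _

lemma rop_pow (ρ : SL2Z →* unitary (H →L[ℂ] H)) (g : SL2Z) (n : ℕ) :
    rop ρ (g ^ n) = rop ρ g ^ n := by
  induction n with
  | zero => simp [rop_one]
  | succ n ih => rw [pow_succ, pow_succ, rop_mul, ih]

lemma star_rop (ρ : SL2Z →* unitary (H →L[ℂ] H)) (g : SL2Z) :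
    star (rop ρ g) = rop ρ g⁻¹ := by
  rw [rop, rop, map_inv, ← Unitary.star_eq_inv, Unitary.coe_star]

theorem Yp_Ym_orthogonal_projections_and_TstarT
    (ρ : SL2Z →* unitary (H →L[ℂ] H)) :
    (IsSelfAdjoint (opYp ρ) ∧ opYp ρ * opYp ρ = opYp ρ) ∧
    (IsSelfAdjoint (opYm ρ) ∧ opYm ρ * opYm ρ = opYm ρ) ∧
    ContinuousLinearMap.adjoint (opT ρ) * opT ρ =
      (8 : ℂ)⁻¹ • ((1 : H →L[ℂ] H) + rop ρ Imat + (6 : ℂ) • opYp ρ) := by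
  set A : H →L[ℂ] H := rop ρ (Rmat⁻¹ * Lmat) with hA
  have h6 : A ^ 6 = 1 := by
    rw [hA, ← rop_pow, show (Rmat⁻¹ * Lmat) ^ 6 = 1 from by apply Subtype.ext; decide, rop_one]
  have hp : ∀ k n : ℕ, A ^ (6 * k + n) = A ^ n := fun k n => by
    rw [pow_add, pow_mul, h6, one_pow, one_mul]
  have hI : rop ρ Imat = A ^ 3 := by
    rw [hA, ← rop_pow, show (Rmat⁻¹ * Lmat) ^ 3 = Imat from by apply Subtype.ext; decide]
  have hRL : rop ρ Rmat⁻¹ * rop ρ Lmat = A := by rw [hA, rop_mul]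
  have hLR : rop ρ Lmat⁻¹ * rop ρ Rmat = A ^ 5 := by
    rw [hA, ← rop_pow, ← rop_mul,
      show Lmat⁻¹ * Rmat = (Rmat⁻¹ * Lmat) ^ 5 from by apply Subtype.ext; decide]
  have hstarA : star A = A ^ 5 := by
    rw [hA, star_rop,
      show (Rmat⁻¹ * Lmat)⁻¹ = (Rmat⁻¹ * Lmat) ^ 5 from by apply Subtype.ext; decide, rop_pow]
  set x : H →L[ℂ] H := (3 : ℂ) • 1 + (2 : ℂ) • A - A ^ 3 + (2 : ℂ) • A ^ 5 with hx
  have hYx : opYp ρ = (6 : ℂ)⁻¹ • x := by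
    rw [opYp, hI, hRL, hLR, hx]
    module
  have h15 : A ^ 15 = A ^ 3 := by rw [show (15:ℕ) = 3 + 6*2 from rfl, pow_add, pow_mul, h6]; simp
  have h25 : A ^ 25 = A := by rw [show (25:ℕ) = 1 + 6*4 from rfl, pow_add, pow_mul, h6]; simp
  have hstarx : star x = x := by
    rw [hx]
    simp only [star_add, star_sub, star_smul, star_one, star_pow, hstarA, ← pow_mul,
      Complex.star_def, Complex.conj_ofNat]
    norm_num [h15, h25]
    module
  have hYpsa : IsSelfAdjoint (opYp ρ) := by
    rw [IsSelfAdjoint, hYx, star_smul, hstarx]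
    simp
  have h8 : A ^ 8 = A ^ 2 := by rw [show (8:ℕ) = 2 + 6 from rfl, pow_add, h6, mul_one]
  have h10 : A ^ 10 = A ^ 4 := by rw [show (10:ℕ) = 4 + 6 from rfl, pow_add, h6, mul_one]
  have hAA : A * A = A ^ 2 := (sq A).symm
  have hxx : x * x = (6 : ℂ) • x := by
    rw [hx]
    simp only [mul_add, add_mul, mul_sub, sub_mul, smul_mul_assoc, mul_smul_comm, smul_smul,
      one_mul, mul_one, ← pow_add, ← pow_succ, ← pow_succ', hAA]
    norm_num [h6, h8, h10]
    module
  have hYp2 : opYp ρ * opYp ρ = opYp ρ := by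
    rw [hYx, smul_mul_assoc, mul_smul_comm, hxx, smul_smul, smul_smul]
    norm_num
  have hstarJ : star (rop ρ Jmat) = rop ρ Jmat⁻¹ := star_rop ρ Jmat
  have hJJ : rop ρ Jmat * rop ρ Jmat⁻¹ = 1 := by
    rw [← rop_mul, mul_inv_cancel, rop_one]
  have hYm : opYm ρ = rop ρ Jmat⁻¹ * opYp ρ * rop ρ Jmat := by
    rw [opYm, ← ContinuousLinearMap.star_eq_adjoint, hstarJ]
  have hYmsa : IsSelfAdjoint (opYm ρ) := by
    rw [IsSelfAdjoint, hYm, star_mul, star_mul, star_rop, hYpsa.star_eq, star_rop, inv_inv,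
      mul_assoc]
  have hYm2 : opYm ρ * opYm ρ = opYm ρ := by
    rw [hYm]
    calc rop ρ Jmat⁻¹ * opYp ρ * rop ρ Jmat * (rop ρ Jmat⁻¹ * opYp ρ * rop ρ Jmat)
        = rop ρ Jmat⁻¹ * opYp ρ * (rop ρ Jmat * rop ρ Jmat⁻¹) * opYp ρ * rop ρ Jmat := by
          simp only [mul_assoc]
      _ = rop ρ Jmat⁻¹ * (opYp ρ * opYp ρ) * rop ρ Jmat := by
          rw [hJJ, mul_one]; simp only [mul_assoc]
      _ = rop ρ Jmat⁻¹ * opYp ρ * rop ρ Jmat := by rw [hYp2]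
  refine ⟨⟨hYpsa, hYp2⟩, ⟨hYmsa, hYm2⟩, ?_⟩
  have hLL : rop ρ Lmat⁻¹ * rop ρ Lmat = 1 := by rw [← rop_mul, inv_mul_cancel, rop_one]
  have hRR : rop ρ Rmat⁻¹ * rop ρ Rmat = 1 := by rw [← rop_mul, inv_mul_cancel, rop_one]
  rw [← ContinuousLinearMap.star_eq_adjoint, opT, hYx, hI, hx]
  simp only [star_smul, star_add, star_rop, Complex.star_def, map_inv₀, Complex.conj_ofNat]
  rw [smul_mul_assoc, mul_smul_comm, add_mul, mul_add, mul_add, hLL, hRR, hLR, hRL]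
  module
end
end

section
/- The self-adjoint operators A := Y₊ − Y₋ and B := id − Y₊ − Y₋ satisfy A² + B² = id, AB + BA = 0, and A² and B² commute with both Y₊ and Y₋. -/
noncomputable section

variable {H : Type*} [NormedAddCommGroup H] [InnerProductSpace ℂ H] [CompleteSpace H]

/-- A = Y₊ − Y₋. -/
def opA (ρ : SL2Z →* unitary (H →L[ℂ] H)) : H →L[ℂ] H := opYp ρ - opYm ρ

/-- B = id − Y₊ − Y₋. -/
def opB (ρ : SL2Z →* unitary (H →L[ℂ] H)) : H →L[ℂ] H := 1 - opYp ρ - opYm ρ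

/-- The self-adjoint operators A := Y₊ − Y₋ and B := id − Y₊ − Y₋ satisfy
A² + B² = id, AB + BA = 0, and A² and B² commute with both Y₊ and Y₋. -/
theorem A_B_supersymmetry (ρ : SL2Z →* unitary (H →L[ℂ] H)) :
    IsSelfAdjoint (opA ρ) ∧ IsSelfAdjoint (opB ρ) ∧
    opA ρ ^ 2 + opB ρ ^ 2 = 1 ∧
    opA ρ * opB ρ + opB ρ * opA ρ = 0 ∧
    Commute (opA ρ ^ 2) (opYp ρ) ∧ Commute (opA ρ ^ 2) (opYm ρ) ∧
    Commute (opB ρ ^ 2) (opYp ρ) ∧ Commute (opB ρ ^ 2) (opYm ρ) := by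
  set φ : SL2Z →* (H →L[ℂ] H) := (unitary (H →L[ℂ] H)).subtype.comp ρ with hφ
  set u : H →L[ℂ] H := φ (Rmat⁻¹ * Lmat) with hu
  have hrop : ∀ g, rop ρ g = φ g := fun g => rfl
  have hrop_star : ∀ g, star (φ g) * φ g = 1 := fun g => by
    simpa [MulMemClass.coe_mul, hφ] using congrArg Subtype.val (unitary.star_mul_self (ρ g))
  have hrop_star' : ∀ g, φ g * star (φ g) = 1 := fun g => by
    simpa [MulMemClass.coe_mul, hφ] using congrArg Subtype.val (unitary.mul_star_self (ρ g))
  have h6 : u ^ 6 = 1 := by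
    rw [hu, ← map_pow, Subtype.ext (by decide : ((Rmat⁻¹ * Lmat)^6).val = (1:SL2Z).val), map_one]
  have h5 : star u = u ^ 5 := by
    calc star u = star u * u^6 := by rw [h6, mul_one]
      _ = (star u * u) * u^5 := by rw [pow_succ', ← mul_assoc]
      _ = u^5 := by rw [hrop_star, one_mul]
  set w : H →L[ℂ] H := (18:ℕ) • 1 + (12:ℕ) • u - (6:ℕ) • u^3 + (12:ℕ) • u^5 with hw
  have hww : w * w = (36:ℕ) • w := by
    have e : w*w = (36:ℕ)•w + (u^6 - 1)*((324:ℕ)•1 - (144:ℕ)•u^2 + (144:ℕ)•u^4) := by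
      rw [hw]; noncomm_ring
    rw [e, h6]; simp
  have hws : star w = w := by
    have hred : ∀ m k : ℕ, u ^ (6*m + k) = u ^ k := fun m k => by
      rw [pow_add, pow_mul, h6, one_pow, one_mul]
    have h15 : (u^5)^3 = u^3 := by
      rw [← pow_mul, show (5*3 : ℕ) = 6*2+3 from rfl]; exact hred 2 3
    have h25 : (u^5)^5 = u := by
      rw [← pow_mul, show (5*5 : ℕ) = 6*4+1 from rfl, hred, pow_one]
    rw [hw]
    simp only [star_add, star_sub, star_nsmul, star_pow, h5, h15, h25, star_one]
    noncomm_ring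
  have hYp : opYp ρ = (36:ℂ)⁻¹ • w := by
    rw [opYp, hrop, hrop, hrop, hrop, hrop, ← map_mul, ← map_mul,
      (by exact Subtype.ext (by decide) : Lmat⁻¹ * Rmat = (Rmat⁻¹ * Lmat)^5),
      (by exact Subtype.ext (by decide) : Imat = (Rmat⁻¹ * Lmat)^3), map_pow, map_pow, ← hu, hw]
    module
  have hP2 : opYp ρ * opYp ρ = opYp ρ := by
    rw [hYp, smul_mul_smul_comm, hww, ← Nat.cast_smul_eq_nsmul ℂ, smul_smul]
    norm_num
  have hPs : star (opYp ρ) = opYp ρ := by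
    rw [hYp, star_smul, hws]
    norm_num
  set j : H →L[ℂ] H := φ Jmat with hj
  have hYm : opYm ρ = star j * opYp ρ * j := by
    rw [opYm, ← ContinuousLinearMap.star_eq_adjoint]; rfl
  have hQ2 : opYm ρ * opYm ρ = opYm ρ := by
    rw [hYm]
    calc (star j * opYp ρ * j) * (star j * opYp ρ * j)
        = star j * opYp ρ * (j * star j) * opYp ρ * j := by noncomm_ring
      _ = star j * (opYp ρ * opYp ρ) * j := by rw [hrop_star' Jmat]; noncomm_ring
      _ = star j * opYp ρ * j := by rw [hP2]
  have hQs : star (opYm ρ) = opYm ρ := by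
    rw [hYm]
    simp only [star_mul, star_star, hPs]
    noncomm_ring
  set P := opYp ρ
  set Q := opYm ρ
  have goal1 : opA ρ ^ 2 + opB ρ ^ 2 = 1 := by
    have e : (P-Q)^2 + (1-P-Q)^2 = 1 + 2*(P*P - P) + 2*(Q*Q - Q) := by noncomm_ring
    rw [opA, opB, e, hP2, hQ2]; simp
  have goal2 : opA ρ * opB ρ + opB ρ * opA ρ = 0 := by
    have e : (P-Q)*(1-P-Q) + (1-P-Q)*(P-Q) = 2*(Q*Q - Q) - 2*(P*P - P) := by noncomm_ring
    rw [opA, opB, e, hP2, hQ2]; simp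
  have goalAP : Commute (opA ρ ^ 2) P := by
    have e : (P-Q)^2*P - P*(P-Q)^2
        = (Q*Q-Q)*P - Q*(P*P-P) - P*(Q*Q-Q) + (P*P-P)*Q := by noncomm_ring
    rw [hP2, hQ2] at e
    simp only [sub_self, zero_mul, mul_zero, sub_zero, zero_sub, add_zero, neg_zero] at e
    exact sub_eq_zero.mp (by rw [opA]; exact e)
  have goalAQ : Commute (opA ρ ^ 2) Q := by
    have e : (P-Q)^2*Q - Q*(P-Q)^2
        = (P*P-P)*Q - P*(Q*Q-Q) - Q*(P*P-P) + (Q*Q-Q)*P := by noncomm_ring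
    rw [hP2, hQ2] at e
    simp only [sub_self, zero_mul, mul_zero, sub_zero, zero_sub, add_zero, neg_zero] at e
    exact sub_eq_zero.mp (by rw [opA]; exact e)
  have hB2 : opB ρ ^ 2 = 1 - opA ρ ^ 2 := by rw [← goal1]; abel
  refine ⟨?_, ?_, goal1, goal2, goalAP, goalAQ, ?_, ?_⟩
  · rw [IsSelfAdjoint, opA, star_sub, hPs, hQs]
  · rw [IsSelfAdjoint, opB, star_sub, star_sub, star_one, hPs, hQs]
  · rw [hB2]; exact Commute.sub_left (Commute.one_left P) goalAP
  · rw [hB2]; exact Commute.sub_left (Commute.one_left Q) goalAQ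
end
end

section
/- For every v ∈ H with 𝐈v = v one has 2Tv = (3Y₋ − id)(𝐉v) = 𝐉(3Y₊v − v). -/
noncomputable section

variable {H : Type*} [NormedAddCommGroup H] [InnerProductSpace ℂ H] [CompleteSpace H]

lemma rop_mul_apply (ρ : SL2Z →* unitary (H →L[ℂ] H)) (g h : SL2Z) (w : H) :
    rop ρ (g * h) w = rop ρ g (rop ρ h w) := by
  simp [rop, map_mul]

lemma rop_adjoint (ρ : SL2Z →* unitary (H →L[ℂ] H)) (g : SL2Z) :
    ContinuousLinearMap.adjoint (rop ρ g) = rop ρ g⁻¹ := by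
  rw [← ContinuousLinearMap.star_eq_adjoint, rop, rop, map_inv, ← Unitary.star_eq_inv,
    ← Unitary.coe_star]

/-- For every v ∈ H with 𝐈v = v one has 2Tv = (3Y₋ − id)(𝐉v) = 𝐉(3Y₊v − v). -/
theorem two_T_eq_on_Hplus (ρ : SL2Z →* unitary (H →L[ℂ] H))
    (v : H) (hv : rop ρ Imat v = v) :
    (2 : ℂ) • opT ρ v = (3 : ℂ) • opYm ρ (rop ρ Jmat v) - rop ρ Jmat v ∧
    (2 : ℂ) • opT ρ v = rop ρ Jmat ((3 : ℂ) • opYp ρ v - v) := by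
  have key : (3 : ℂ) • opYp ρ v = rop ρ (Rmat⁻¹ * Lmat) v + rop ρ (Lmat⁻¹ * Rmat) v + v := by
    simp only [opYp, ContinuousLinearMap.smul_apply, ContinuousLinearMap.add_apply,
      ContinuousLinearMap.sub_apply, ContinuousLinearMap.mul_apply, ContinuousLinearMap.one_apply,
      rop_mul_apply, hv]
    module
  have hT : (2 : ℂ) • opT ρ v = rop ρ Lmat v + rop ρ Rmat v := by
    simp only [opT, ContinuousLinearMap.smul_apply, ContinuousLinearMap.add_apply]
    module
  have h1 : Jmat * (Rmat⁻¹ * Lmat) = Rmat * Imat := Subtype.ext (by decide)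
  have h2 : Jmat * (Lmat⁻¹ * Rmat) = Lmat := Subtype.ext (by decide)
  have h3 : Jmat⁻¹ * (Rmat⁻¹ * Lmat) = Rmat := Subtype.ext (by decide)
  have h4 : Jmat⁻¹ * (Lmat⁻¹ * Rmat) = Lmat * Imat := Subtype.ext (by decide)
  have h5 : Jmat * Jmat = Imat := Subtype.ext (by decide)
  have h6 : Jmat⁻¹ = Jmat * Imat := Subtype.ext (by decide)
  constructor
  · have hJJ : rop ρ Jmat (rop ρ Jmat v) = v := by rw [← rop_mul_apply, h5, hv]
    have hYm : opYm ρ (rop ρ Jmat v) = rop ρ Jmat⁻¹ (opYp ρ v) := by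
      simp only [opYm, ContinuousLinearMap.mul_apply, hJJ, rop_adjoint]
    have hsm : (3 : ℂ) • rop ρ Jmat⁻¹ (opYp ρ v) = rop ρ Jmat⁻¹ ((3 : ℂ) • opYp ρ v) :=
      (map_smul _ _ _).symm
    rw [hYm, hsm, key]
    simp only [map_add, ← rop_mul_apply, h3, h4]
    have h7 : rop ρ Jmat⁻¹ v = rop ρ Jmat v := by rw [h6, rop_mul_apply, hv]
    rw [rop_mul_apply (g := Lmat), hv, h7, hT]
    abel
  · have key2 : (3 : ℂ) • opYp ρ v - v = rop ρ (Rmat⁻¹ * Lmat) v + rop ρ (Lmat⁻¹ * Rmat) v := by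
      rw [key]; abel
    rw [key2, map_add, ← rop_mul_apply, ← rop_mul_apply, h1, h2, rop_mul_apply, hv, hT]
    abel
end
end

section
/- For every k ≥ 1, if D is a bounded operator on ℓ²(V; ℂ) satisfying (D f)(v) = Σ_{w : dist(v,w) = k} f(w) for all f ∈ ℓ²(V; ℂ) and all vertices v (where dist denotes graph distance), then the operator norm of D satisfies ‖D‖ ≤ 3·k·2^{k/2}. -/
noncomputable section

open scoped BigOperators

namespace ThreeRegTreeAux

open SimpleGraph

variable {V : Type*} {G : SimpleGraph V}

/-- In an acyclic connected graph, every path realizes the distance. -/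
lemma path_length_eq_dist (hconn : G.Connected) (hacyclic : G.IsAcyclic)
    {u v : V} (p : G.Walk u v) (hp : p.IsPath) : p.length = G.dist u v := by
  classical
  obtain ⟨q, hq⟩ := hconn.exists_walk_length_eq_dist u v
  have h1 : G.dist u v ≤ p.length := SimpleGraph.dist_le p
  have hbp : q.bypass.IsPath := SimpleGraph.Walk.bypass_isPath q
  have huniq : (⟨p, hp⟩ : G.Path u v) = ⟨q.bypass, hbp⟩ := hacyclic.path_unique _ _
  have hpq : p = q.bypass := congrArg Subtype.val huniq
  have h2 : p.length ≤ q.length := hpq ▸ SimpleGraph.Walk.length_bypass_le q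
  omega

/-- A walk whose length equals the distance between its endpoints is a path. -/
lemma isPath_of_length_eq_dist (hconn : G.Connected)
    {u v : V} (p : G.Walk u v) (hlen : p.length = G.dist u v) : p.IsPath := by
  classical
  induction p with
  | nil => exact SimpleGraph.Walk.IsPath.nil
  | @cons a b c hadj q ih =>
    have hd1 : G.dist a b ≤ 1 := by
      simpa using SimpleGraph.dist_le (SimpleGraph.Walk.cons hadj SimpleGraph.Walk.nil)
    have htri : G.dist a c ≤ G.dist a b + G.dist b c := hconn.dist_triangle
    have hqd : G.dist b c ≤ q.length := SimpleGraph.dist_le q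
    rw [SimpleGraph.Walk.length_cons] at hlen
    have hq : q.length = G.dist b c := by omega
    have hqp : q.IsPath := ih hq
    refine hqp.cons ?_
    intro hu
    have := SimpleGraph.dist_le (q.dropUntil a hu)
    have hle := SimpleGraph.Walk.length_dropUntil_le q hu
    omega

lemma exists_path (hconn : G.Connected) (u v : V) :
    ∃ p : G.Walk u v, p.IsPath ∧ p.length = G.dist u v := by
  obtain ⟨q, hq⟩ := hconn.exists_walk_length_eq_dist u v
  exact ⟨q, isPath_of_length_eq_dist hconn q hq, hq⟩

/-- Two paths emanating from a common vertex in a tree have a common prefix after which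
they diverge into disjoint parts. -/
lemma meet (hacyclic : G.IsAcyclic) :
    ∀ {a b : V} (p : G.Walk a b), p.IsPath → ∀ {c : V} (q : G.Walk a c), q.IsPath →
      ∃ (m : V) (t : G.Walk a m) (r : G.Walk m b) (s : G.Walk m c),
        p = t.append r ∧ q = t.append s ∧ (r.reverse.append s).IsPath := by
  classical
  intro a b p
  induction p with
  | nil =>
    intro _ c q hq
    refine ⟨_, SimpleGraph.Walk.nil, SimpleGraph.Walk.nil, q, rfl, rfl, ?_⟩
    simpa using hq
  | @cons a a₁ b hadj p' ih =>
    intro hp c q hq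
    cases q with
    | nil =>
      refine ⟨a, SimpleGraph.Walk.nil, SimpleGraph.Walk.cons hadj p', SimpleGraph.Walk.nil,
        rfl, rfl, ?_⟩
      rw [SimpleGraph.Walk.append_nil]
      exact hp.reverse
    | @cons _ a₂ _ hadj2 q' =>
      by_cases he : a₁ = a₂
      · subst he
        obtain ⟨m, t, r, s, h1, h2, h3⟩ := ih hp.of_cons q' hq.of_cons
        refine ⟨m, SimpleGraph.Walk.cons hadj t, r, s, ?_, ?_, h3⟩
        · rw [SimpleGraph.Walk.cons_append, h1]
        · rw [SimpleGraph.Walk.cons_append, h2]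
      · refine ⟨a, SimpleGraph.Walk.nil, SimpleGraph.Walk.cons hadj p',
          SimpleGraph.Walk.cons hadj2 q', rfl, rfl, ?_⟩
        rw [SimpleGraph.Walk.isPath_def, SimpleGraph.Walk.support_append,
          SimpleGraph.Walk.support_reverse]
        rw [List.nodup_append]
        refine ⟨List.nodup_reverse.mpr hp.support_nodup, ?_, ?_⟩
        · simpa using hq.of_cons.support_nodup
        · intro x hx y hx2 hxy
          subst hxy
          rw [List.mem_reverse] at hx
          simp only [SimpleGraph.Walk.support_cons, List.tail_cons] at hx2
          rw [SimpleGraph.Walk.support_cons, List.mem_cons] at hx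
          rcases hx with rfl | hx1
          · exact ((SimpleGraph.Walk.cons_isPath_iff _ _).mp hq).2 hx2
          · -- two distinct paths from `a` to `x`, contradiction with acyclicity
            have hP1 : (SimpleGraph.Walk.cons hadj (p'.takeUntil x hx1)).IsPath := by
              refine (hp.of_cons.takeUntil hx1).cons ?_
              intro hmem
              exact ((SimpleGraph.Walk.cons_isPath_iff _ _).mp hp).2
                (SimpleGraph.Walk.support_takeUntil_subset _ hx1 hmem)
            have hP2 : (SimpleGraph.Walk.cons hadj2 (q'.takeUntil x hx2)).IsPath := by
              refine (hq.of_cons.takeUntil hx2).cons ?_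
              intro hmem
              exact ((SimpleGraph.Walk.cons_isPath_iff _ _).mp hq).2
                (SimpleGraph.Walk.support_takeUntil_subset _ hx2 hmem)
            have huniq := hacyclic.path_unique
              ⟨SimpleGraph.Walk.cons hadj (p'.takeUntil x hx1), hP1⟩
              ⟨SimpleGraph.Walk.cons hadj2 (q'.takeUntil x hx2), hP2⟩
            have heq : SimpleGraph.Walk.cons hadj (p'.takeUntil x hx1)
                = SimpleGraph.Walk.cons hadj2 (q'.takeUntil x hx2) := congrArg Subtype.val huniq
            have e1 := congrArg (fun W => SimpleGraph.Walk.getVert W 1) heq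
            simp only [SimpleGraph.Walk.getVert_cons_succ, SimpleGraph.Walk.getVert_zero] at e1
            exact he e1

/-- The "median" decomposition of distances in a tree. -/
lemma dist_decomp (hconn : G.Connected) (hacyclic : G.IsAcyclic) (o v w : V) :
    ∃ (j : ℕ) (m : V), G.dist v m = j ∧ j + G.dist m o = G.dist v o ∧
      j + G.dist m w = G.dist v w ∧
      G.dist o w + 2 * j = G.dist v o + G.dist v w := by
  obtain ⟨p, hp, hpl⟩ := exists_path hconn v o
  obtain ⟨q, hq, hql⟩ := exists_path hconn v w
  obtain ⟨m, t, r, st, h1, h2, h3⟩ := meet hacyclic p hp q hq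
  have ht : t.IsPath := (h1 ▸ hp).of_append_left
  have hr : r.IsPath := (h1 ▸ hp).of_append_right
  have hs : st.IsPath := (h2 ▸ hq).of_append_right
  have e1 : t.length + r.length = G.dist v o := by
    rw [← hpl, h1, SimpleGraph.Walk.length_append]
  have e2 : t.length + st.length = G.dist v w := by
    rw [← hql, h2, SimpleGraph.Walk.length_append]
  have e3 : r.length + st.length = G.dist o w := by
    have := path_length_eq_dist hconn hacyclic _ h3
    rw [SimpleGraph.Walk.length_append, SimpleGraph.Walk.length_reverse] at this
    exact this
  have e4 : t.length = G.dist v m := path_length_eq_dist hconn hacyclic t ht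
  have e5 : r.length = G.dist m o := path_length_eq_dist hconn hacyclic r hr
  have e6 : st.length = G.dist m w := path_length_eq_dist hconn hacyclic st hs
  exact ⟨t.length, m, e4.symm, by omega, by omega, by omega⟩

/-- Uniqueness of the point at given distance along a geodesic. -/
lemma meet_unique (hconn : G.Connected) (hacyclic : G.IsAcyclic) {o v m m' : V} {j : ℕ}
    (h1 : G.dist v m = j) (h2 : j + G.dist m o = G.dist v o)
    (h1' : G.dist v m' = j) (h2' : j + G.dist m' o = G.dist v o) : m = m' := by
  obtain ⟨p, hp, hpl⟩ := exists_path hconn v m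
  obtain ⟨r, hr, hrl⟩ := exists_path hconn m o
  obtain ⟨p', hp', hpl'⟩ := exists_path hconn v m'
  obtain ⟨r', hr', hrl'⟩ := exists_path hconn m' o
  have hP : (p.append r).IsPath := by
    refine isPath_of_length_eq_dist hconn _ ?_
    rw [SimpleGraph.Walk.length_append]; omega
  have hP' : (p'.append r').IsPath := by
    refine isPath_of_length_eq_dist hconn _ ?_
    rw [SimpleGraph.Walk.length_append]; omega
  have huniq := hacyclic.path_unique ⟨p.append r, hP⟩ ⟨p'.append r', hP'⟩
  have heq : p.append r = p'.append r' := congrArg Subtype.val huniq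
  have e1 : (p.append r).getVert j = m := by
    rw [SimpleGraph.Walk.getVert_append]
    rw [hpl, h1, if_neg (lt_irrefl j)]
    simp
  have e1' : (p'.append r').getVert j = m' := by
    rw [SimpleGraph.Walk.getVert_append]
    rw [hpl', h1', if_neg (lt_irrefl j)]
    simp
  rw [← e1, ← e1', heq]

lemma neighborSet_finite (hdeg : ∀ v : V, Nat.card (G.neighborSet v) = 3) (v : V) :
    (G.neighborSet v).Finite := by
  by_contra h
  have h' : (G.neighborSet v).Infinite := h
  have h0 : Nat.card (G.neighborSet v) = 0 := @Nat.card_eq_zero_of_infinite _ h'.to_subtype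
  rw [hdeg v] at h0
  omega

lemma ncard_neighborSet (hdeg : ∀ v : V, Nat.card (G.neighborSet v) = 3) (v : V) :
    (G.neighborSet v).ncard = 3 := by
  rw [← Nat.card_coe_set_eq]; exact hdeg v

lemma penult (hconn : G.Connected) {u w : V} {n : ℕ} (h : G.dist u w = n + 1) :
    ∃ x, G.Adj x w ∧ G.dist u x = n := by
  classical
  obtain ⟨p, hp, hl⟩ := exists_path hconn u w
  have hne : w ≠ u := by
    rintro rfl
    rw [SimpleGraph.dist_self] at h; omega
  obtain ⟨x, hadj, q, hq⟩ := SimpleGraph.Walk.exists_eq_cons_of_ne hne p.reverse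
  have hlq : q.length = n := by
    have hc := congrArg SimpleGraph.Walk.length hq
    rw [SimpleGraph.Walk.length_reverse, hl, h, SimpleGraph.Walk.length_cons] at hc
    omega
  have h1 : G.dist u x ≤ n := by
    have hle := SimpleGraph.dist_le q.reverse
    rwa [SimpleGraph.Walk.length_reverse, hlq] at hle
  have hxw : G.dist x w ≤ 1 := by
    simpa using SimpleGraph.dist_le (SimpleGraph.Walk.cons hadj.symm SimpleGraph.Walk.nil)
  have htri : G.dist u w ≤ G.dist u x + G.dist x w := hconn.dist_triangle
  exact ⟨x, hadj.symm, by omega⟩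

lemma sphere_finite_card (hconn : G.Connected)
    (hdeg : ∀ v : V, Nat.card (G.neighborSet v) = 3) (u : V) :
    ∀ n : ℕ, {w : V | G.dist u w = n}.Finite ∧
      {w : V | G.dist u w = n}.ncard ≤ if n = 0 then 1 else 3 * 2 ^ (n - 1)
  | 0 => by
      have hset : {w : V | G.dist u w = 0} = {u} := by
        ext w
        simp only [Set.mem_setOf_eq, Set.mem_singleton_iff]
        rw [hconn.dist_eq_zero_iff]
        exact eq_comm
      rw [hset]
      exact ⟨Set.finite_singleton u, by simp⟩
  | 1 => by
      have hset : {w : V | G.dist u w = 1} = G.neighborSet u := by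
        ext w
        simp only [Set.mem_setOf_eq, SimpleGraph.mem_neighborSet]
        exact SimpleGraph.dist_eq_one_iff_adj
      rw [hset]
      refine ⟨neighborSet_finite hdeg u, ?_⟩
      rw [ncard_neighborSet hdeg]
      norm_num
  | (n+2) => by
      classical
      obtain ⟨hfin', hcard'⟩ := sphere_finite_card hconn hdeg u (n+1)
      set S : Set V := {w : V | G.dist u w = n + 2} with hS
      set S' : Set V := {w : V | G.dist u w = n + 1} with hS'
      have hsub : S ⊆ ⋃ x ∈ S', (G.neighborSet x ∩ S) := by
        intro w hw
        obtain ⟨x, hadj, hx⟩ := penult hconn hw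
        exact Set.mem_biUnion hx ⟨hadj, hw⟩
      have hfin : S.Finite :=
        (hfin'.biUnion (fun x _ => ((neighborSet_finite hdeg x).inter_of_left S))).subset hsub
      refine ⟨hfin, ?_⟩
      have hbound : ∀ x ∈ S', (G.neighborSet x ∩ S).ncard ≤ 2 := by
        intro x hx
        obtain ⟨z, hzadj, hz⟩ := penult hconn hx
        have hzx : z ∈ G.neighborSet x := hzadj.symm
        have hsub2 : G.neighborSet x ∩ S ⊆ G.neighborSet x \ {z} := by
          rintro y ⟨hy1, hy2⟩
          refine ⟨hy1, ?_⟩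
          simp only [Set.mem_singleton_iff]
          rintro rfl
          rw [hS] at hy2
          simp only [Set.mem_setOf_eq] at hy2
          omega
        calc (G.neighborSet x ∩ S).ncard ≤ (G.neighborSet x \ {z}).ncard :=
              Set.ncard_le_ncard hsub2 ((neighborSet_finite hdeg x).diff)
          _ = (G.neighborSet x).ncard - 1 :=
              Set.ncard_diff_singleton_of_mem hzx
          _ ≤ 2 := by rw [ncard_neighborSet hdeg]
      have hsubF : hfin.toFinset ⊆ hfin'.toFinset.biUnion
          (fun x => ((neighborSet_finite hdeg x).inter_of_left S).toFinset) := by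
        intro w hw
        rw [Set.Finite.mem_toFinset] at hw
        obtain ⟨x, hadj, hx⟩ := penult hconn hw
        rw [Finset.mem_biUnion]
        exact ⟨x, (Set.Finite.mem_toFinset _).mpr hx,
          (Set.Finite.mem_toFinset _).mpr ⟨hadj, hw⟩⟩
      have hcard : hfin.toFinset.card ≤
          ∑ x ∈ hfin'.toFinset, ((neighborSet_finite hdeg x).inter_of_left S).toFinset.card :=
        (Finset.card_le_card hsubF).trans Finset.card_biUnion_le
      have hle2 : ∀ x ∈ hfin'.toFinset,
          ((neighborSet_finite hdeg x).inter_of_left S).toFinset.card ≤ 2 := by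
        intro x hx
        rw [← Set.ncard_eq_toFinset_card _ _]
        exact hbound x ((Set.Finite.mem_toFinset _).mp hx)
      have htot : S.ncard ≤ 2 * S'.ncard := by
        calc S.ncard = hfin.toFinset.card := Set.ncard_eq_toFinset_card S hfin
          _ ≤ _ := hcard
          _ ≤ ∑ _x ∈ hfin'.toFinset, 2 := Finset.sum_le_sum hle2
          _ = hfin'.toFinset.card * 2 := by rw [Finset.sum_const, smul_eq_mul]
          _ = 2 * S'.ncard := by rw [← Set.ncard_eq_toFinset_card S' hfin']; ring
      have hS'le : S'.ncard ≤ 3 * 2 ^ n := by simpa using hcard'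
      have hmain : S.ncard ≤ 2 * (3 * 2 ^ n) := htot.trans (by omega)
      have hfinal : 3 * 2 ^ (n + 2 - 1) = 2 * (3 * 2 ^ n) := by
        have he : n + 2 - 1 = n + 1 := by omega
        rw [he, pow_succ]; ring
      have hif : (if n + 2 = 0 then 1 else 3 * 2 ^ (n + 2 - 1)) = 3 * 2 ^ (n + 2 - 1) := by
        simp
      rw [hif, hfinal]
      exact hmain
      
/-- The weighted Schur row sum estimate on the 3-regular tree. -/
lemma row_sum_le (hconn : G.Connected) (hacyclic : G.IsAcyclic)
    (hdeg : ∀ v : V, Nat.card (G.neighborSet v) = 3)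
    (o : V) {k : ℕ} (hk : 1 ≤ k) (v : V)
    (F : Finset V) (hF : ∀ w, w ∈ F ↔ G.dist v w = k) :
    ∑ w ∈ F, (Real.sqrt 2) ^ ((G.dist o v : ℤ) - (G.dist o w : ℤ)) ≤
      3 * k * (Real.sqrt 2) ^ k := by
  classical
  set s : ℝ := Real.sqrt 2 with hs
  have hs0 : 0 < s := Real.sqrt_pos.mpr (by norm_num)
  have hs2 : s ^ 2 = 2 := Real.sq_sqrt (by norm_num)
  set J : V → ℕ := fun w => (G.dist o v + k - G.dist o w) / 2 with hJ
  have hdec : ∀ w ∈ F, ∃ m : V, G.dist v m = J w ∧ J w + G.dist m o = G.dist v o ∧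
      J w + G.dist m w = k ∧ G.dist o w + 2 * J w = G.dist o v + k ∧ J w ≤ k := by
    intro w hw
    rw [hF] at hw
    obtain ⟨j, m, e1, e2, e3, e4⟩ := dist_decomp hconn hacyclic o v w
    rw [hw] at e3 e4
    have hvo : G.dist v o = G.dist o v := SimpleGraph.dist_comm
    have hJw : J w = j := by
      have h2j : G.dist o v + k - G.dist o w = 2 * j := by omega
      rw [hJ]
      simp only
      omega
    rw [hJw]
    exact ⟨m, e1, e2, e3, by omega, by omega⟩
  have hmaps : ∀ w ∈ F, J w ∈ Finset.range (k+1) := by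
    intro w hw
    obtain ⟨m, _, _, _, _, hjk⟩ := hdec w hw
    rw [Finset.mem_range]; omega
  rw [← Finset.sum_fiberwise_of_maps_to hmaps]
  have hfiber : ∀ j ∈ Finset.range (k+1),
      (∑ w ∈ F.filter (fun w => J w = j), s ^ ((G.dist o v : ℤ) - (G.dist o w : ℤ)))
        ≤ if j = k then s ^ k else 3 * 2 ^ (k - 1) * (s ^ k)⁻¹ := by
    intro j hj
    rw [Finset.mem_range] at hj
    have hval : ∀ w ∈ F.filter (fun w => J w = j),
        s ^ ((G.dist o v : ℤ) - (G.dist o w : ℤ)) = s ^ ((2*j : ℤ) - k) := by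
      intro w hw
      rw [Finset.mem_filter] at hw
      obtain ⟨m, _, _, _, he, _⟩ := hdec w hw.1
      rw [hw.2] at he
      congr 1
      push_cast
      omega
    rw [Finset.sum_congr rfl hval, Finset.sum_const, nsmul_eq_mul]
    by_cases hem : (F.filter (fun w => J w = j)).Nonempty
    · obtain ⟨w₀, hw₀⟩ := hem
      rw [Finset.mem_filter] at hw₀
      obtain ⟨m₀, hm1, hm2, hm3, _, _⟩ := hdec w₀ hw₀.1
      rw [hw₀.2] at hm1 hm2 hm3
      obtain ⟨hsfin, hscard⟩ := sphere_finite_card hconn hdeg m₀ (k - j)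
      have hsubset : F.filter (fun w => J w = j) ⊆ hsfin.toFinset := by
        intro w hw
        rw [Finset.mem_filter] at hw
        obtain ⟨m, g1, g2, g3, _, _⟩ := hdec w hw.1
        rw [hw.2] at g1 g2 g3
        have hmm : m = m₀ := meet_unique hconn hacyclic g1 g2 hm1 hm2
        rw [Set.Finite.mem_toFinset]
        simp only [Set.mem_setOf_eq]
        rw [← hmm]
        omega
      have hcard : (F.filter (fun w => J w = j)).card ≤ {w : V | G.dist m₀ w = k - j}.ncard := by
        rw [Set.ncard_eq_toFinset_card _ hsfin]
        exact Finset.card_le_card hsubset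
      by_cases hjk : j = k
      · subst hjk
        rw [if_pos rfl]
        have hc1 : (F.filter (fun w => J w = j)).card ≤ 1 := by
          have h2 := hscard
          rw [Nat.sub_self] at h2 hcard
          rw [if_pos rfl] at h2
          omega
        have hpow : s ^ ((2*j:ℤ) - j) = s ^ j := by
          rw [show (2*(j:ℤ) - j) = ((j:ℕ):ℤ) by push_cast; ring, zpow_natCast]
        rw [hpow]
        calc ((F.filter (fun w => J w = j)).card : ℝ) * s ^ j ≤ 1 * s ^ j := by
              apply mul_le_mul_of_nonneg_right _ (pow_nonneg hs0.le j)
              exact_mod_cast hc1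
          _ = s ^ j := one_mul _
      · rw [if_neg hjk]
        have hjk' : j < k := lt_of_le_of_ne (by omega) hjk
        have hc1 : (F.filter (fun w => J w = j)).card ≤ 3 * 2 ^ (k - j - 1) := by
          have h2 := hscard
          rw [if_neg (by omega : ¬(k - j = 0))] at h2
          omega
        have hval2 : s ^ ((2*j:ℤ) - k) = 2 ^ j * (s ^ k)⁻¹ := by
          rw [show ((2*j:ℤ) - k) = ((2*j : ℕ) : ℤ) - ((k:ℕ):ℤ) by push_cast; ring]
          rw [zpow_sub₀ hs0.ne', zpow_natCast, zpow_natCast]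
          rw [pow_mul, hs2, div_eq_mul_inv]
        rw [hval2]
        have hpowadd : (2:ℝ) ^ (k - j - 1) * 2 ^ j = 2 ^ (k - 1) := by
          rw [← pow_add]
          congr 1
          omega
        calc ((F.filter (fun w => J w = j)).card : ℝ) * (2 ^ j * (s ^ k)⁻¹)
            ≤ ((3 * 2 ^ (k - j - 1) : ℕ) : ℝ) * (2 ^ j * (s ^ k)⁻¹) := by
              apply mul_le_mul_of_nonneg_right _ (by positivity)
              exact_mod_cast hc1
          _ = 3 * (2 ^ (k - j - 1) * 2 ^ j) * (s ^ k)⁻¹ := by push_cast; ring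
          _ = 3 * 2 ^ (k - 1) * (s ^ k)⁻¹ := by rw [hpowadd]
    · rw [Finset.not_nonempty_iff_eq_empty] at hem
      rw [hem]
      simp only [Finset.card_empty, Nat.cast_zero, zero_mul]
      split <;> positivity
  calc ∑ j ∈ Finset.range (k+1), ∑ w ∈ F.filter (fun w => J w = j),
        s ^ ((G.dist o v : ℤ) - (G.dist o w : ℤ))
      ≤ ∑ j ∈ Finset.range (k+1), (if j = k then s ^ k else 3 * 2 ^ (k - 1) * (s ^ k)⁻¹) :=
        Finset.sum_le_sum hfiber
    _ = (∑ _j ∈ Finset.range k, 3 * 2 ^ (k - 1) * (s ^ k)⁻¹) + s ^ k := by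
        rw [Finset.sum_range_succ, if_pos rfl]
        congr 1
        apply Finset.sum_congr rfl
        intro j hj
        rw [Finset.mem_range] at hj
        rw [if_neg (by omega)]
    _ = k * (3 * 2 ^ (k - 1) * (s ^ k)⁻¹) + s ^ k := by
        rw [Finset.sum_const, nsmul_eq_mul, Finset.card_range]
    _ ≤ 3 * k * s ^ k := by
        have hX : (0:ℝ) < s ^ k := pow_pos hs0 k
        have hX2 : (s ^ k)^2 = 2 ^ k := by rw [← pow_mul, mul_comm k 2, pow_mul, hs2]
        have h2P : (2:ℝ)^k = 2 * 2^(k-1) := by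
          rw [← pow_succ']
          congr 1
          omega
        have hk1 : (1:ℝ) ≤ (k:ℝ) := by exact_mod_cast hk
        have hPX : 3 * (2:ℝ)^(k-1) * (s^k)⁻¹ = (3/2) * s^k := by
          have hP : (2:ℝ)^(k-1) = (s^k)^2 / 2 := by rw [hX2, h2P]; ring
          rw [hP]
          field_simp
        rw [hPX]
        nlinarith [mul_nonneg hX.le (by linarith : (0:ℝ) ≤ (3/2)*(k:ℝ) - 1)]

end ThreeRegTreeAux

/-- Let G be the 3-regular tree on the vertex type V (connected, acyclic, every vertex with
exactly 3 neighbors).  For k ≥ 1, if D is a bounded operator on ℓ²(V; ℂ) with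
(D f)(v) = Σ_{w : dist(v,w) = k} f(w), then ‖D‖ ≤ 3·k·2^{k/2}. -/
theorem norm_distance_k_operator_three_regular_tree
    {V : Type*} (G : SimpleGraph V)
    (hconn : G.Connected) (hacyclic : G.IsAcyclic)
    (hdeg : ∀ v : V, Nat.card (G.neighborSet v) = 3)
    (k : ℕ) (hk : 1 ≤ k)
    (D : lp (fun _ : V => ℂ) 2 →L[ℂ] lp (fun _ : V => ℂ) 2)
    (hD : ∀ (f : lp (fun _ : V => ℂ) 2) (v : V),
      (D f : ∀ _ : V, ℂ) v = ∑ᶠ w ∈ {w : V | G.dist v w = k}, (f : ∀ _ : V, ℂ) w) :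
    ‖D‖ ≤ 3 * k * (2 : ℝ) ^ ((k : ℝ) / 2) := by
  classical
  obtain ⟨o⟩ : Nonempty V := hconn.nonempty
  set s : ℝ := Real.sqrt 2 with hs
  have hs0 : 0 < s := Real.sqrt_pos.mpr (by norm_num)
  have hfin : ∀ v : V, {w : V | G.dist v w = k}.Finite := fun v =>
    (ThreeRegTreeAux.sphere_finite_card hconn hdeg v k).1
  set B : ℝ := 3 * k * s ^ k with hB
  have hkpos : (0:ℝ) < (k:ℝ) := by
    have : 0 < k := hk
    exact_mod_cast this
  have hBpos : 0 < B := by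
    rw [hB]
    exact mul_pos (mul_pos (by norm_num) hkpos) (pow_pos hs0 k)
  set c : V → V → ℝ := fun a b => s ^ ((G.dist o a : ℤ) - (G.dist o b : ℤ)) with hc
  have hcpos : ∀ a b, 0 < c a b := fun a b => zpow_pos hs0 _
  have hrow : ∀ v : V, ∑ w ∈ (hfin v).toFinset, c v w ≤ B := by
    intro v
    apply ThreeRegTreeAux.row_sum_le hconn hacyclic hdeg o hk v
    intro w
    rw [Set.Finite.mem_toFinset]
    exact Iff.rfl
  have hB2 : (2:ℝ) ^ ((k:ℝ)/2) = s ^ k := by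
    rw [hs, Real.sqrt_eq_rpow]
    rw [← Real.rpow_natCast ((2:ℝ) ^ ((1:ℝ)/2)) k, ← Real.rpow_mul (by norm_num : (0:ℝ) ≤ 2)]
    congr 1
    ring
  rw [show (3:ℝ) * k * (2:ℝ) ^ ((k:ℝ)/2) = B by rw [hB, hB2]]
  apply D.opNorm_le_bound hBpos.le
  intro f
  have hgv : ∀ v : V, (D f : ∀ _ : V, ℂ) v = ∑ w ∈ (hfin v).toFinset, (f : ∀ _ : V, ℂ) w := by
    intro v
    rw [hD f v]
    exact finsum_mem_eq_finite_toFinset_sum _ (hfin v)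
  -- pointwise Cauchy-Schwarz estimate
  have hpt : ∀ v : V, ‖(D f : ∀ _ : V, ℂ) v‖^2 ≤
      B * ∑ w ∈ (hfin v).toFinset, c w v * ‖(f : ∀ _ : V, ℂ) w‖^2 := by
    intro v
    have h1 : ‖(D f : ∀ _ : V, ℂ) v‖ ≤ ∑ w ∈ (hfin v).toFinset, ‖(f : ∀ _ : V, ℂ) w‖ := by
      rw [hgv v]
      exact norm_sum_le _ _
    have hCS := Finset.sum_mul_sq_le_sq_mul_sq (hfin v).toFinset
      (fun w => Real.sqrt (c v w)) (fun w => Real.sqrt (c w v) * ‖(f : ∀ _ : V, ℂ) w‖)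
    have hprod : ∀ w ∈ (hfin v).toFinset,
        Real.sqrt (c v w) * (Real.sqrt (c w v) * ‖(f : ∀ _ : V, ℂ) w‖)
          = ‖(f : ∀ _ : V, ℂ) w‖ := by
      intro w _
      rw [← mul_assoc, ← Real.sqrt_mul (hcpos v w).le]
      have hone : c v w * c w v = 1 := by
        rw [hc]
        simp only
        rw [← zpow_add₀ hs0.ne']
        rw [show ((G.dist o v : ℤ) - G.dist o w) + ((G.dist o w : ℤ) - G.dist o v) = 0 by ring]
        exact zpow_zero s
      rw [hone, Real.sqrt_one, one_mul]
    have hsq1 : ∀ w : V, Real.sqrt (c v w) ^ 2 = c v w := fun w => Real.sq_sqrt (hcpos v w).le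
    have hsq2 : ∀ w : V, (Real.sqrt (c w v) * ‖(f : ∀ _ : V, ℂ) w‖)^2
        = c w v * ‖(f : ∀ _ : V, ℂ) w‖^2 := by
      intro w
      rw [mul_pow, Real.sq_sqrt (hcpos w v).le]
    rw [Finset.sum_congr rfl hprod] at hCS
    simp only [hsq1, hsq2] at hCS
    calc ‖(D f : ∀ _ : V, ℂ) v‖^2 ≤ (∑ w ∈ (hfin v).toFinset, ‖(f : ∀ _ : V, ℂ) w‖)^2 :=
          pow_le_pow_left₀ (norm_nonneg _) h1 2
      _ ≤ (∑ w ∈ (hfin v).toFinset, c v w)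
            * (∑ w ∈ (hfin v).toFinset, c w v * ‖(f : ∀ _ : V, ℂ) w‖^2) := hCS
      _ ≤ B * ∑ w ∈ (hfin v).toFinset, c w v * ‖(f : ∀ _ : V, ℂ) w‖^2 := by
          apply mul_le_mul_of_nonneg_right (hrow v)
          exact Finset.sum_nonneg fun w _ => mul_nonneg (hcpos w v).le (sq_nonneg _)
  -- pass to ℝ≥0∞
  set e : V → V → ENNReal := fun v w =>
    if G.dist v w = k then ENNReal.ofReal (c w v * ‖(f : ∀ _ : V, ℂ) w‖^2) else 0 with he
  have hE1 : ∀ v, ENNReal.ofReal (‖(D f : ∀ _ : V, ℂ) v‖^2)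
      ≤ ENNReal.ofReal B * ∑' w, e v w := by
    intro v
    have hsum : ∑' w, e v w
        = ∑ w ∈ (hfin v).toFinset, ENNReal.ofReal (c w v * ‖(f : ∀ _ : V, ℂ) w‖^2) := by
      rw [tsum_eq_sum (s := (hfin v).toFinset) ?_]
      · apply Finset.sum_congr rfl
        intro w hw
        rw [he]
        simp only
        have hwk : G.dist v w = k := by simpa using hw
        rw [if_pos hwk]
      · intro w hw
        rw [he]
        simp only
        rw [if_neg]
        intro hne
        exact hw ((Set.Finite.mem_toFinset _).mpr hne)
    rw [hsum,
      ← ENNReal.ofReal_sum_of_nonneg (fun w _ => mul_nonneg (hcpos w v).le (sq_nonneg _)),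
      ← ENNReal.ofReal_mul hBpos.le]
    exact ENNReal.ofReal_le_ofReal (hpt v)
  have hE2 : ∀ w, (∑' v, e v w)
      ≤ ENNReal.ofReal B * ENNReal.ofReal (‖(f : ∀ _ : V, ℂ) w‖^2) := by
    intro w
    have hcomm : ∀ v, e v w =
        if G.dist w v = k then ENNReal.ofReal (c w v * ‖(f : ∀ _ : V, ℂ) w‖^2) else 0 := by
      intro v
      rw [he]
      simp only
      rw [SimpleGraph.dist_comm]
    calc (∑' v, e v w)
        = ∑ v ∈ (hfin w).toFinset, ENNReal.ofReal (c w v * ‖(f : ∀ _ : V, ℂ) w‖^2) := by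
          rw [tsum_congr hcomm, tsum_eq_sum (s := (hfin w).toFinset) ?_]
          · apply Finset.sum_congr rfl
            intro v hv
            have hvk : G.dist w v = k := by simpa using hv
            rw [if_pos hvk]
          · intro v hv
            rw [if_neg]
            intro hne
            exact hv ((Set.Finite.mem_toFinset _).mpr hne)
      _ = ENNReal.ofReal ((∑ v ∈ (hfin w).toFinset, c w v) * ‖(f : ∀ _ : V, ℂ) w‖^2) := by
          rw [← ENNReal.ofReal_sum_of_nonneg (fun v _ => mul_nonneg (hcpos w v).le (sq_nonneg _)),
            Finset.sum_mul]
      _ ≤ ENNReal.ofReal (B * ‖(f : ∀ _ : V, ℂ) w‖^2) :=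
          ENNReal.ofReal_le_ofReal (mul_le_mul_of_nonneg_right (hrow w) (sq_nonneg _))
      _ = ENNReal.ofReal B * ENNReal.ofReal (‖(f : ∀ _ : V, ℂ) w‖^2) :=
          ENNReal.ofReal_mul hBpos.le
  have htwo : ((2:ENNReal)).toReal = 2 := by norm_num
  have hrpow : ∀ x : ℝ, x ^ ((2:ENNReal)).toReal = x ^ 2 := by
    intro x
    rw [htwo, show (2:ℝ) = ((2:ℕ):ℝ) by norm_num, Real.rpow_natCast]
  have htwo0 : 0 < ((2:ENNReal)).toReal := by rw [htwo]; norm_num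
  have hgsum : Summable (fun v => ‖(D f : ∀ _ : V, ℂ) v‖^2) := by
    simpa only [hrpow] using (lp.memℓp (D f)).summable htwo0
  have hfsum : Summable (fun w => ‖(f : ∀ _ : V, ℂ) w‖^2) := by
    simpa only [hrpow] using (lp.memℓp f).summable htwo0
  have hgnorm : ‖D f‖^2 = ∑' v, ‖(D f : ∀ _ : V, ℂ) v‖^2 := by
    simpa only [hrpow] using lp.norm_rpow_eq_tsum htwo0 (D f)
  have hfnorm : ‖f‖^2 = ∑' w, ‖(f : ∀ _ : V, ℂ) w‖^2 := by
    simpa only [hrpow] using lp.norm_rpow_eq_tsum htwo0 f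
  have hchain : ENNReal.ofReal (‖D f‖^2) ≤ ENNReal.ofReal ((B * ‖f‖)^2) := by
    calc ENNReal.ofReal (‖D f‖^2)
        = ∑' v, ENNReal.ofReal (‖(D f : ∀ _ : V, ℂ) v‖^2) := by
          rw [hgnorm, ENNReal.ofReal_tsum_of_nonneg (fun v => sq_nonneg _) hgsum]
      _ ≤ ∑' v, (ENNReal.ofReal B * ∑' w, e v w) := ENNReal.tsum_le_tsum hE1
      _ = ENNReal.ofReal B * ∑' v, ∑' w, e v w := ENNReal.tsum_mul_left
      _ = ENNReal.ofReal B * ∑' w, ∑' v, e v w := by rw [ENNReal.tsum_comm]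
      _ ≤ ENNReal.ofReal B
            * ∑' w, (ENNReal.ofReal B * ENNReal.ofReal (‖(f : ∀ _ : V, ℂ) w‖^2)) :=
          mul_le_mul_right (ENNReal.tsum_le_tsum hE2) _
      _ = ENNReal.ofReal B
            * (ENNReal.ofReal B * ∑' w, ENNReal.ofReal (‖(f : ∀ _ : V, ℂ) w‖^2)) := by
          rw [ENNReal.tsum_mul_left]
      _ = ENNReal.ofReal B * (ENNReal.ofReal B * ENNReal.ofReal (‖f‖^2)) := by
          rw [← ENNReal.ofReal_tsum_of_nonneg (fun w => sq_nonneg _) hfsum, ← hfnorm]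
      _ = ENNReal.ofReal ((B * ‖f‖)^2) := by
          rw [← ENNReal.ofReal_mul hBpos.le, ← ENNReal.ofReal_mul hBpos.le]
          congr 1
          ring
  have hsq : ‖D f‖^2 ≤ (B * ‖f‖)^2 :=
    (ENNReal.ofReal_le_ofReal_iff (by positivity)).mp hchain
  have h2 : (0:ℝ) ≤ B * ‖f‖ := mul_nonneg hBpos.le (norm_nonneg f)
  have := Real.sqrt_le_sqrt hsq
  rwa [Real.sqrt_sq (norm_nonneg _), Real.sqrt_sq h2] at this
end
end

section
/- Let F : SL(2,ℤ) → ℤ be defined on A = [[a,b],[c,d]] by F(A) := ⌈(ab + cd)/(a² + c²)⌉ (ceiling of the rational number (ab+cd)/(a²+c²); note a² + c² > 0 for A ∈ SL(2,ℤ)). Then for every A ∈ SL(2,ℤ) and every M in the set {±[[-1,-1],[1,0]], ±[[0,1],[-1,-1]], ±[[-1,1],[-1,0]], ±[[0,-1],[1,-1]]} one has |F(MA) − F(A)| ≤ 1. -/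
noncomputable section

/-- F(A) = ⌈(ab + cd)/(a² + c²)⌉ for A = [[a,b],[c,d]] ∈ SL(2,ℤ). -/
def Fceil (A : SL2Z) : ℤ :=
  ⌈((A.1 0 0 * A.1 0 1 + A.1 1 0 * A.1 1 1 : ℤ) : ℚ) /
    ((A.1 0 0 ^ 2 + A.1 1 0 ^ 2 : ℤ) : ℚ)⌉

def M₁ : SL2Z := ⟨!![-1, -1; 1, 0], by decide⟩
def M₂ : SL2Z := ⟨!![0, 1; -1, -1], by decide⟩
def M₃ : SL2Z := ⟨!![-1, 1; -1, 0], by decide⟩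
def M₄ : SL2Z := ⟨!![0, -1; 1, -1], by decide⟩
def M₅ : SL2Z := ⟨!![1, 1; -1, 0], by decide⟩
def M₆ : SL2Z := ⟨!![0, -1; 1, 1], by decide⟩
def M₇ : SL2Z := ⟨!![1, -1; 1, 0], by decide⟩
def M₈ : SL2Z := ⟨!![0, 1; -1, 1], by decide⟩

lemma den_pos (B : SL2Z) : 0 < B.1 0 0 ^ 2 + B.1 1 0 ^ 2 := by
  have h := B.2
  rw [Matrix.det_fin_two] at h
  nlinarith [sq_nonneg (B.1 0 0 * B.1 0 1 + B.1 1 0 * B.1 1 1), sq_nonneg (B.1 0 1),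
    sq_nonneg (B.1 1 1), sq_nonneg (B.1 0 0), sq_nonneg (B.1 1 0), h]

lemma Fceil_close (B C : SL2Z)
    (h : |(B.1 0 0 * B.1 0 1 + B.1 1 0 * B.1 1 1) * (C.1 0 0 ^ 2 + C.1 1 0 ^ 2)
      - (C.1 0 0 * C.1 0 1 + C.1 1 0 * C.1 1 1) * (B.1 0 0 ^ 2 + B.1 1 0 ^ 2)|
      ≤ (B.1 0 0 ^ 2 + B.1 1 0 ^ 2) * (C.1 0 0 ^ 2 + C.1 1 0 ^ 2)) :
    |Fceil B - Fceil C| ≤ 1 := by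
  have hB := den_pos B
  have hC := den_pos C
  set NB := B.1 0 0 * B.1 0 1 + B.1 1 0 * B.1 1 1 with hNB
  set DB := B.1 0 0 ^ 2 + B.1 1 0 ^ 2 with hDB
  set NC := C.1 0 0 * C.1 0 1 + C.1 1 0 * C.1 1 1 with hNC
  set DC := C.1 0 0 ^ 2 + C.1 1 0 ^ 2 with hDC
  have hBQ : (0:ℚ) < (DB : ℚ) := by exact_mod_cast hB
  have hCQ : (0:ℚ) < (DC : ℚ) := by exact_mod_cast hC
  have hxy : |((NB : ℚ) / (DB : ℚ)) - ((NC : ℚ) / (DC : ℚ))| ≤ 1 := by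
    rw [div_sub_div _ _ (ne_of_gt hBQ) (ne_of_gt hCQ), abs_div,
      div_le_one (by positivity)]
    have : |(NB : ℚ) * (DC : ℚ) - (NC : ℚ) * (DB : ℚ)| ≤ (DB : ℚ) * (DC : ℚ) := by
      exact_mod_cast h
    calc |(NB : ℚ) * (DC : ℚ) - (DB : ℚ) * (NC : ℚ)|
        = |(NB : ℚ) * (DC : ℚ) - (NC : ℚ) * (DB : ℚ)| := by ring_nf
      _ ≤ (DB : ℚ) * (DC : ℚ) := this
      _ ≤ |(DB : ℚ) * (DC : ℚ)| := le_abs_self _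
  have hx : Fceil B = ⌈(NB : ℚ) / (DB : ℚ)⌉ := rfl
  have hy : Fceil C = ⌈(NC : ℚ) / (DC : ℚ)⌉ := rfl
  rw [hx, hy, abs_le] at *
  obtain ⟨h1, h2⟩ := hxy
  constructor
  · have : (NC : ℚ) / (DC : ℚ) ≤ (NB : ℚ) / (DB : ℚ) + 1 := by linarith
    have := Int.ceil_le_ceil this
    rw [Int.ceil_add_one] at this
    linarith
  · have : (NB : ℚ) / (DB : ℚ) ≤ (NC : ℚ) / (DC : ℚ) + 1 := by linarith
    have := Int.ceil_le_ceil this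
    rw [Int.ceil_add_one] at this
    linarith

set_option maxHeartbeats 3200000 in
/-- For every A ∈ SL(2,ℤ) and every M ∈ {±[[-1,-1],[1,0]], ±[[0,1],[-1,-1]],
±[[-1,1],[-1,0]], ±[[0,-1],[1,-1]]} one has |F(MA) − F(A)| ≤ 1. -/
theorem Fceil_almost_invariant (A : SL2Z) (M : SL2Z)
    (hM : M ∈ ({M₁, M₂, M₃, M₄, M₅, M₆, M₇, M₈} : Set SL2Z)) :
    |Fceil (M * A) - Fceil A| ≤ 1 := by
  have hdet : A.1 0 0 * A.1 1 1 - A.1 0 1 * A.1 1 0 = 1 := by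
    have := A.2
    rwa [Matrix.det_fin_two] at this
  have hD : 0 < A.1 0 0 ^ 2 + A.1 1 0 ^ 2 := den_pos A
  set a := A.1 0 0 with ha
  set b := A.1 0 1 with hb
  set c := A.1 1 0 with hc
  set d := A.1 1 1 with hd
  simp only [Set.mem_insert_iff, Set.mem_singleton_iff] at hM
  rcases hM with rfl | rfl | rfl | rfl | rfl | rfl | rfl | rfl
  · apply Fceil_close
    have e1 : (M₁ * A).1 0 0 = -a - c := by
      rw [show (M₁ * A).1 = M₁.1 * A.1 from rfl]
      simp [M₁, Matrix.SpecialLinearGroup.coe_mul, Matrix.mul_apply, Fin.sum_univ_two, a, c] <;> ring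
    have e2 : (M₁ * A).1 0 1 = -b - d := by
      rw [show (M₁ * A).1 = M₁.1 * A.1 from rfl]
      simp [M₁, Matrix.SpecialLinearGroup.coe_mul, Matrix.mul_apply, Fin.sum_univ_two, b, d] <;> ring
    have e3 : (M₁ * A).1 1 0 = a := by
      rw [show (M₁ * A).1 = M₁.1 * A.1 from rfl]
      simp [M₁, Matrix.SpecialLinearGroup.coe_mul, Matrix.mul_apply, Fin.sum_univ_two, a, c] <;> ring
    have e4 : (M₁ * A).1 1 1 = b := by
      rw [show (M₁ * A).1 = M₁.1 * A.1 from rfl]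
      simp [M₁, Matrix.SpecialLinearGroup.coe_mul, Matrix.mul_apply, Fin.sum_univ_two, b, d] <;> ring
    have hD' : 0 < (M₁ * A).1 0 0 ^ 2 + (M₁ * A).1 1 0 ^ 2 := den_pos (M₁ * A)
    rw [e1, e3] at hD'
    rw [e1, e2, e3, e4]
    have hkey : ((-a - c) * (-b - d) + (a) * (b)) * (a ^ 2 + c ^ 2)
        - (a * b + c * d) * ((-a - c) ^ 2 + (a) ^ 2) = a^2 - a*c - c^2 := by
      linear_combination (a^2 - a*c - c^2) * hdet
    rw [abs_le]
    constructor <;>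
      nlinarith [hkey, hD, hD', mul_pos hD' hD, sq_nonneg (a + 2*c), sq_nonneg (a - 2*c),
        sq_nonneg (2*a + c), sq_nonneg (2*a - c), sq_nonneg a, sq_nonneg c]
  · apply Fceil_close
    have e1 : (M₂ * A).1 0 0 = c := by
      rw [show (M₂ * A).1 = M₂.1 * A.1 from rfl]
      simp [M₂, Matrix.SpecialLinearGroup.coe_mul, Matrix.mul_apply, Fin.sum_univ_two, a, c] <;> ring
    have e2 : (M₂ * A).1 0 1 = d := by
      rw [show (M₂ * A).1 = M₂.1 * A.1 from rfl]
      simp [M₂, Matrix.SpecialLinearGroup.coe_mul, Matrix.mul_apply, Fin.sum_univ_two, b, d] <;> ring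
    have e3 : (M₂ * A).1 1 0 = -a - c := by
      rw [show (M₂ * A).1 = M₂.1 * A.1 from rfl]
      simp [M₂, Matrix.SpecialLinearGroup.coe_mul, Matrix.mul_apply, Fin.sum_univ_two, a, c] <;> ring
    have e4 : (M₂ * A).1 1 1 = -b - d := by
      rw [show (M₂ * A).1 = M₂.1 * A.1 from rfl]
      simp [M₂, Matrix.SpecialLinearGroup.coe_mul, Matrix.mul_apply, Fin.sum_univ_two, b, d] <;> ring
    have hD' : 0 < (M₂ * A).1 0 0 ^ 2 + (M₂ * A).1 1 0 ^ 2 := den_pos (M₂ * A)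
    rw [e1, e3] at hD'
    rw [e1, e2, e3, e4]
    have hkey : ((c) * (d) + (-a - c) * (-b - d)) * (a ^ 2 + c ^ 2)
        - (a * b + c * d) * ((c) ^ 2 + (-a - c) ^ 2) = a^2 + a*c - c^2 := by
      linear_combination (a^2 + a*c - c^2) * hdet
    rw [abs_le]
    constructor <;>
      nlinarith [hkey, hD, hD', mul_pos hD' hD, sq_nonneg (a + 2*c), sq_nonneg (a - 2*c),
        sq_nonneg (2*a + c), sq_nonneg (2*a - c), sq_nonneg a, sq_nonneg c]
  · apply Fceil_close
    have e1 : (M₃ * A).1 0 0 = -a + c := by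
      rw [show (M₃ * A).1 = M₃.1 * A.1 from rfl]
      simp [M₃, Matrix.SpecialLinearGroup.coe_mul, Matrix.mul_apply, Fin.sum_univ_two, a, c] <;> ring
    have e2 : (M₃ * A).1 0 1 = -b + d := by
      rw [show (M₃ * A).1 = M₃.1 * A.1 from rfl]
      simp [M₃, Matrix.SpecialLinearGroup.coe_mul, Matrix.mul_apply, Fin.sum_univ_two, b, d] <;> ring
    have e3 : (M₃ * A).1 1 0 = -a := by
      rw [show (M₃ * A).1 = M₃.1 * A.1 from rfl]
      simp [M₃, Matrix.SpecialLinearGroup.coe_mul, Matrix.mul_apply, Fin.sum_univ_two, a, c] <;> ring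
    have e4 : (M₃ * A).1 1 1 = -b := by
      rw [show (M₃ * A).1 = M₃.1 * A.1 from rfl]
      simp [M₃, Matrix.SpecialLinearGroup.coe_mul, Matrix.mul_apply, Fin.sum_univ_two, b, d] <;> ring
    have hD' : 0 < (M₃ * A).1 0 0 ^ 2 + (M₃ * A).1 1 0 ^ 2 := den_pos (M₃ * A)
    rw [e1, e3] at hD'
    rw [e1, e2, e3, e4]
    have hkey : ((-a + c) * (-b + d) + (-a) * (-b)) * (a ^ 2 + c ^ 2)
        - (a * b + c * d) * ((-a + c) ^ 2 + (-a) ^ 2) = -a^2 - a*c + c^2 := by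
      linear_combination (-a^2 - a*c + c^2) * hdet
    rw [abs_le]
    constructor <;>
      nlinarith [hkey, hD, hD', mul_pos hD' hD, sq_nonneg (a + 2*c), sq_nonneg (a - 2*c),
        sq_nonneg (2*a + c), sq_nonneg (2*a - c), sq_nonneg a, sq_nonneg c]
  · apply Fceil_close
    have e1 : (M₄ * A).1 0 0 = -c := by
      rw [show (M₄ * A).1 = M₄.1 * A.1 from rfl]
      simp [M₄, Matrix.SpecialLinearGroup.coe_mul, Matrix.mul_apply, Fin.sum_univ_two, a, c] <;> ring
    have e2 : (M₄ * A).1 0 1 = -d := by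
      rw [show (M₄ * A).1 = M₄.1 * A.1 from rfl]
      simp [M₄, Matrix.SpecialLinearGroup.coe_mul, Matrix.mul_apply, Fin.sum_univ_two, b, d] <;> ring
    have e3 : (M₄ * A).1 1 0 = a - c := by
      rw [show (M₄ * A).1 = M₄.1 * A.1 from rfl]
      simp [M₄, Matrix.SpecialLinearGroup.coe_mul, Matrix.mul_apply, Fin.sum_univ_two, a, c] <;> ring
    have e4 : (M₄ * A).1 1 1 = b - d := by
      rw [show (M₄ * A).1 = M₄.1 * A.1 from rfl]
      simp [M₄, Matrix.SpecialLinearGroup.coe_mul, Matrix.mul_apply, Fin.sum_univ_two, b, d] <;> ring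
    have hD' : 0 < (M₄ * A).1 0 0 ^ 2 + (M₄ * A).1 1 0 ^ 2 := den_pos (M₄ * A)
    rw [e1, e3] at hD'
    rw [e1, e2, e3, e4]
    have hkey : ((-c) * (-d) + (a - c) * (b - d)) * (a ^ 2 + c ^ 2)
        - (a * b + c * d) * ((-c) ^ 2 + (a - c) ^ 2) = -a^2 + a*c + c^2 := by
      linear_combination (-a^2 + a*c + c^2) * hdet
    rw [abs_le]
    constructor <;>
      nlinarith [hkey, hD, hD', mul_pos hD' hD, sq_nonneg (a + 2*c), sq_nonneg (a - 2*c),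
        sq_nonneg (2*a + c), sq_nonneg (2*a - c), sq_nonneg a, sq_nonneg c]
  · apply Fceil_close
    have e1 : (M₅ * A).1 0 0 = a + c := by
      rw [show (M₅ * A).1 = M₅.1 * A.1 from rfl]
      simp [M₅, Matrix.SpecialLinearGroup.coe_mul, Matrix.mul_apply, Fin.sum_univ_two, a, c] <;> ring
    have e2 : (M₅ * A).1 0 1 = b + d := by
      rw [show (M₅ * A).1 = M₅.1 * A.1 from rfl]
      simp [M₅, Matrix.SpecialLinearGroup.coe_mul, Matrix.mul_apply, Fin.sum_univ_two, b, d] <;> ring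
    have e3 : (M₅ * A).1 1 0 = -a := by
      rw [show (M₅ * A).1 = M₅.1 * A.1 from rfl]
      simp [M₅, Matrix.SpecialLinearGroup.coe_mul, Matrix.mul_apply, Fin.sum_univ_two, a, c] <;> ring
    have e4 : (M₅ * A).1 1 1 = -b := by
      rw [show (M₅ * A).1 = M₅.1 * A.1 from rfl]
      simp [M₅, Matrix.SpecialLinearGroup.coe_mul, Matrix.mul_apply, Fin.sum_univ_two, b, d] <;> ring
    have hD' : 0 < (M₅ * A).1 0 0 ^ 2 + (M₅ * A).1 1 0 ^ 2 := den_pos (M₅ * A)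
    rw [e1, e3] at hD'
    rw [e1, e2, e3, e4]
    have hkey : ((a + c) * (b + d) + (-a) * (-b)) * (a ^ 2 + c ^ 2)
        - (a * b + c * d) * ((a + c) ^ 2 + (-a) ^ 2) = a^2 - a*c - c^2 := by
      linear_combination (a^2 - a*c - c^2) * hdet
    rw [abs_le]
    constructor <;>
      nlinarith [hkey, hD, hD', mul_pos hD' hD, sq_nonneg (a + 2*c), sq_nonneg (a - 2*c),
        sq_nonneg (2*a + c), sq_nonneg (2*a - c), sq_nonneg a, sq_nonneg c]
  · apply Fceil_close
    have e1 : (M₆ * A).1 0 0 = -c := by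
      rw [show (M₆ * A).1 = M₆.1 * A.1 from rfl]
      simp [M₆, Matrix.SpecialLinearGroup.coe_mul, Matrix.mul_apply, Fin.sum_univ_two, a, c] <;> ring
    have e2 : (M₆ * A).1 0 1 = -d := by
      rw [show (M₆ * A).1 = M₆.1 * A.1 from rfl]
      simp [M₆, Matrix.SpecialLinearGroup.coe_mul, Matrix.mul_apply, Fin.sum_univ_two, b, d] <;> ring
    have e3 : (M₆ * A).1 1 0 = a + c := by
      rw [show (M₆ * A).1 = M₆.1 * A.1 from rfl]
      simp [M₆, Matrix.SpecialLinearGroup.coe_mul, Matrix.mul_apply, Fin.sum_univ_two, a, c] <;> ring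
    have e4 : (M₆ * A).1 1 1 = b + d := by
      rw [show (M₆ * A).1 = M₆.1 * A.1 from rfl]
      simp [M₆, Matrix.SpecialLinearGroup.coe_mul, Matrix.mul_apply, Fin.sum_univ_two, b, d] <;> ring
    have hD' : 0 < (M₆ * A).1 0 0 ^ 2 + (M₆ * A).1 1 0 ^ 2 := den_pos (M₆ * A)
    rw [e1, e3] at hD'
    rw [e1, e2, e3, e4]
    have hkey : ((-c) * (-d) + (a + c) * (b + d)) * (a ^ 2 + c ^ 2)
        - (a * b + c * d) * ((-c) ^ 2 + (a + c) ^ 2) = a^2 + a*c - c^2 := by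
      linear_combination (a^2 + a*c - c^2) * hdet
    rw [abs_le]
    constructor <;>
      nlinarith [hkey, hD, hD', mul_pos hD' hD, sq_nonneg (a + 2*c), sq_nonneg (a - 2*c),
        sq_nonneg (2*a + c), sq_nonneg (2*a - c), sq_nonneg a, sq_nonneg c]
  · apply Fceil_close
    have e1 : (M₇ * A).1 0 0 = a - c := by
      rw [show (M₇ * A).1 = M₇.1 * A.1 from rfl]
      simp [M₇, Matrix.SpecialLinearGroup.coe_mul, Matrix.mul_apply, Fin.sum_univ_two, a, c] <;> ring
    have e2 : (M₇ * A).1 0 1 = b - d := by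
      rw [show (M₇ * A).1 = M₇.1 * A.1 from rfl]
      simp [M₇, Matrix.SpecialLinearGroup.coe_mul, Matrix.mul_apply, Fin.sum_univ_two, b, d] <;> ring
    have e3 : (M₇ * A).1 1 0 = a := by
      rw [show (M₇ * A).1 = M₇.1 * A.1 from rfl]
      simp [M₇, Matrix.SpecialLinearGroup.coe_mul, Matrix.mul_apply, Fin.sum_univ_two, a, c] <;> ring
    have e4 : (M₇ * A).1 1 1 = b := by
      rw [show (M₇ * A).1 = M₇.1 * A.1 from rfl]
      simp [M₇, Matrix.SpecialLinearGroup.coe_mul, Matrix.mul_apply, Fin.sum_univ_two, b, d] <;> ring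
    have hD' : 0 < (M₇ * A).1 0 0 ^ 2 + (M₇ * A).1 1 0 ^ 2 := den_pos (M₇ * A)
    rw [e1, e3] at hD'
    rw [e1, e2, e3, e4]
    have hkey : ((a - c) * (b - d) + (a) * (b)) * (a ^ 2 + c ^ 2)
        - (a * b + c * d) * ((a - c) ^ 2 + (a) ^ 2) = -a^2 - a*c + c^2 := by
      linear_combination (-a^2 - a*c + c^2) * hdet
    rw [abs_le]
    constructor <;>
      nlinarith [hkey, hD, hD', mul_pos hD' hD, sq_nonneg (a + 2*c), sq_nonneg (a - 2*c),
        sq_nonneg (2*a + c), sq_nonneg (2*a - c), sq_nonneg a, sq_nonneg c]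
  · apply Fceil_close
    have e1 : (M₈ * A).1 0 0 = c := by
      rw [show (M₈ * A).1 = M₈.1 * A.1 from rfl]
      simp [M₈, Matrix.SpecialLinearGroup.coe_mul, Matrix.mul_apply, Fin.sum_univ_two, a, c] <;> ring
    have e2 : (M₈ * A).1 0 1 = d := by
      rw [show (M₈ * A).1 = M₈.1 * A.1 from rfl]
      simp [M₈, Matrix.SpecialLinearGroup.coe_mul, Matrix.mul_apply, Fin.sum_univ_two, b, d] <;> ring
    have e3 : (M₈ * A).1 1 0 = -a + c := by
      rw [show (M₈ * A).1 = M₈.1 * A.1 from rfl]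
      simp [M₈, Matrix.SpecialLinearGroup.coe_mul, Matrix.mul_apply, Fin.sum_univ_two, a, c] <;> ring
    have e4 : (M₈ * A).1 1 1 = -b + d := by
      rw [show (M₈ * A).1 = M₈.1 * A.1 from rfl]
      simp [M₈, Matrix.SpecialLinearGroup.coe_mul, Matrix.mul_apply, Fin.sum_univ_two, b, d] <;> ring
    have hD' : 0 < (M₈ * A).1 0 0 ^ 2 + (M₈ * A).1 1 0 ^ 2 := den_pos (M₈ * A)
    rw [e1, e3] at hD'
    rw [e1, e2, e3, e4]
    have hkey : ((c) * (d) + (-a + c) * (-b + d)) * (a ^ 2 + c ^ 2)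
        - (a * b + c * d) * ((c) ^ 2 + (-a + c) ^ 2) = -a^2 + a*c + c^2 := by
      linear_combination (-a^2 + a*c + c^2) * hdet
    rw [abs_le]
    constructor <;>
      nlinarith [hkey, hD, hD', mul_pos hD' hD, sq_nonneg (a + 2*c), sq_nonneg (a - 2*c),
        sq_nonneg (2*a + c), sq_nonneg (2*a - c), sq_nonneg a, sq_nonneg c]
end
end
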